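/- Let λ be a partition of n and let w = s_{i_1}⋯s_{i_k} be a reduced expression with 1 ≤ i_1 < ⋯ < i_k < n. For a standard λ-tableau t, let γ_t(w) be the coefficient of v_{t'} in v_t T_w. Then γ_t(w) = γ_t(i_1)⋯γ_t(i_k) if t is w-transposable, and γ_t(w) = 0 otherwise; here for a w-transposable tableau t, γ_t(i_j) = −1/[ρ_j] if i_j lies on the diagonal of t, γ_t(i_j) = −1/[ρ'_j] if c_t(i_j) = −c_t(i_j − 1), and γ_t(i_j) = α_{ρ_j} if c_t(i_j) = −c_t(i_j + 1), where ρ_j = c_t(i_j) − c_t(i_j + 1) and ρ'_j = c_t(i_j − 1) − c_t(i_j + 1). -/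

import Mathlib

open scoped Classical

noncomputable section

/-- The simple transposition swapping `i` and `i+1` (0-indexed; this is the Coxeter
generator `s_{i+1}` in 1-indexed notation) in the symmetric group on `Fin n`. -/
def sTr (n i : ℕ) : Equiv.Perm (Fin n) :=
  if h : i + 1 < n then Equiv.swap ⟨i, Nat.lt_of_succ_lt h⟩ ⟨i + 1, h⟩ else 1

/-- The Coxeter length: the minimal length of an expression of `w` as a product of
simple transpositions. -/
def len (n : ℕ) (w : Equiv.Perm (Fin n)) : ℕ :=
  sInf {k | ∃ l : List ℕ, l.length = k ∧ (∀ i ∈ l, i + 1 < n) ∧ w = (l.map (sTr n)).prod}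

/-- The (strict) Bruhat order on the symmetric group: `y < z` iff `z` can be obtained
from `y` by successively multiplying by reflections, increasing the length at each step. -/
def bruhatLT (n : ℕ) (y z : Equiv.Perm (Fin n)) : Prop :=
  Relation.TransGen
    (fun a b => (∃ u v : Fin n, u ≠ v ∧ b = a * Equiv.swap u v) ∧ len n a < len n b) y z

/-- `y ≺ z` iff `y < z` in the Bruhat order and `ℓ(y) ≢ ℓ(z) (mod 2)`. -/
def precLT (n : ℕ) (y z : Equiv.Perm (Fin n)) : Prop :=
  bruhatLT n y z ∧ ¬ (len n y % 2 = len n z % 2)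

/-- The element `A_z = ½(T_z + ε_z T_z^#)`. -/
def Aelt {R H : Type*} [CommRing R] [Ring H] [Algebra R H] (n : ℕ)
    (T : Equiv.Perm (Fin n) → H) (hash : H ≃ₐ[R] H) (z : Equiv.Perm (Fin n)) : H :=
  Ring.inverse (2 : R) • (T z + ((-1 : R) ^ len n z) • hash (T z))

/-- The `ε`-eigenspace `H^ε = {h ∈ H : h^# = ε h}` of an algebra automorphism,
viewed as an `R`-submodule. -/
def fixedSubmodule {R H : Type*} [CommRing R] [Ring H] [Algebra R H]
    (φ : H ≃ₐ[R] H) (ε : R) : Submodule R H where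
  carrier := {x | φ x = ε • x}
  add_mem' := by
    intro a b ha hb
    simp only [Set.mem_setOf_eq] at *
    rw [map_add, ha, hb, smul_add]
  zero_mem' := by simp
  smul_mem' := by
    intro c a ha
    simp only [Set.mem_setOf_eq] at *
    rw [map_smul, ha, smul_smul, smul_smul, mul_comm]

/-- The quantum integer `[k] = q + q³ + ⋯ + q^{2k−1}` for `k ≥ 0`, and
`[k] = −q⁻¹ − q⁻³ − ⋯ − q^{2k+1}` for `k < 0`. -/
def qint {F : Type*} [Field F] (q : F) : ℤ → F
  | Int.ofNat k => ∑ j ∈ Finset.range k, q ^ (2 * j + 1)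
  | Int.negSucc k => -∑ j ∈ Finset.range (k + 1), (q ^ (2 * j + 1))⁻¹

/-- The coefficients `α_k = √(−1)·√([k+1])·√([k−1])/[k]` for `k > 0`, with
`α_{−k} = −α_k` (and `α_0 = 0`). -/
def alph {F : Type*} [Field F] (q sqm1 : F) (sq : ℕ → F) (m : ℤ) : F :=
  if 0 ≤ m then sqm1 * sq (m.toNat + 1) * sq (m.toNat - 1) / qint q m
  else -(sqm1 * sq ((-m).toNat + 1) * sq ((-m).toNat - 1) / qint q (-m))

/-- A standard `μ`-tableau, recorded by the positions of its entries: `pos k` is the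
cell containing the entry `k+1`.  Standardness means the entries are distinct cells
of `μ` and `t(r,c) < t(s,d)` whenever `(r,c) ≠ (s,d)`, `r ≤ s` and `c ≤ d`. -/
def IsStdTab (μ : YoungDiagram) {n : ℕ} (pos : Fin n → ℕ × ℕ) : Prop :=
  Function.Injective pos ∧ (∀ k, pos k ∈ μ) ∧
    ∀ j k : Fin n, (pos j).1 ≤ (pos k).1 → (pos j).2 ≤ (pos k).2 → pos j ≠ pos k → j < k

/-- The type of standard `μ`-tableaux with `n` entries. -/
def StdTab (μ : YoungDiagram) (n : ℕ) : Type :=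
  {pos : Fin n → ℕ × ℕ // IsStdTab μ pos}

/-- The content `c_t(m+1) = c − r` of the entry `m+1`, located in cell `(r, c)`
(and junk value `0` when `m ≥ n`). -/
def contN {n : ℕ} (pos : Fin n → ℕ × ℕ) (m : ℕ) : ℤ :=
  if h : m < n then ((pos ⟨m, h⟩).2 : ℤ) - ((pos ⟨m, h⟩).1 : ℤ) else 0

/-- The axial distance `ρ_t(i+1) = c_t(i+1) − c_t(i+2)` (0-indexed `i`). -/
def rhoAx {n : ℕ} (pos : Fin n → ℕ × ℕ) (i : ℕ) (hi : i + 1 < n) : ℤ :=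
  (((pos ⟨i, Nat.lt_of_succ_lt hi⟩).2 : ℤ) - ((pos ⟨i, Nat.lt_of_succ_lt hi⟩).1 : ℤ))
    - (((pos ⟨i + 1, hi⟩).2 : ℤ) - ((pos ⟨i + 1, hi⟩).1 : ℤ))

/-- The tableau `t·s_{i+1}`, obtained from `t` by swapping the entries `i+1`, `i+2`. -/
def swapEnt {n : ℕ} (pos : Fin n → ℕ × ℕ) (i : ℕ) (hi : i + 1 < n) : Fin n → ℕ × ℕ :=
  pos ∘ (Equiv.swap ⟨i, Nat.lt_of_succ_lt hi⟩ ⟨i + 1, hi⟩)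

/-- The conjugate of a tableau: the entry in cell `(r,c)` moves to cell `(c,r)`. -/
def conjPos {n : ℕ} (pos : Fin n → ℕ × ℕ) : Fin n → ℕ × ℕ :=
  fun k => ((pos k).2, (pos k).1)

lemma isStdTab_conj {μ : YoungDiagram} {n : ℕ} {pos : Fin n → ℕ × ℕ}
    (h : IsStdTab μ pos) : IsStdTab μ.transpose (conjPos pos) := by
  obtain ⟨hinj, hmem, hord⟩ := h
  refine ⟨?_, ?_, ?_⟩
  · intro a b hab
    apply hinj
    have h1 : ((pos a).2, (pos a).1) = ((pos b).2, (pos b).1) := hab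
    have h2 := congrArg Prod.snd h1
    have h3 := congrArg Prod.fst h1
    simp only at h2 h3
    exact Prod.ext h2 h3
  · intro k
    rw [YoungDiagram.mem_transpose]
    exact hmem k
  · intro j k h1 h2 hne
    refine hord j k h2 h1 ?_
    intro hc
    exact hne (by rw [conjPos, conjPos, hc])

/-- The conjugate standard tableau `t' ∈ Std(μ')` of `t ∈ Std(μ)`. -/
def conjTab {μ : YoungDiagram} {n : ℕ} (t : StdTab μ n) : StdTab μ.transpose n :=
  ⟨conjPos t.val, isStdTab_conj t.prop⟩

/-- The conjugate standard tableau, going from `Std(μ')` back to `Std(μ)`. -/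
def backConjTab {μ : YoungDiagram} {n : ℕ} (s : StdTab μ.transpose n) : StdTab μ n :=
  ⟨conjPos s.val, by
    have h := isStdTab_conj s.prop
    rwa [YoungDiagram.transpose_transpose] at h⟩

/-- The linear map `τ : S(μ') → S(μ)` with `v_s ↦ v_{s'}`. -/
def crossTau (F : Type*) [Field F] (μ : YoungDiagram) (n : ℕ) :
    (StdTab μ.transpose n → F) →ₗ[F] (StdTab μ n → F) where
  toFun f := fun t => f (conjTab t)
  map_add' _ _ := rfl
  map_smul' _ _ := rfl

/-- The linear map `τ : S(μ) → S(μ')` with `v_t ↦ v_{t'}`. -/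
def fwdTau (F : Type*) [Field F] (μ : YoungDiagram) (n : ℕ) :
    (StdTab μ n → F) →ₗ[F] (StdTab μ.transpose n → F) where
  toFun f := fun s => f (backConjTab s)
  map_add' _ _ := rfl
  map_smul' _ _ := rfl

/-- For a self-conjugate shape, the conjugate tableau `t'` of `t`, as a standard
tableau of the same shape. -/
def selfConjTab {μ : YoungDiagram} (hself : μ.transpose = μ) {n : ℕ}
    (t : StdTab μ n) : StdTab μ n :=
  ⟨conjPos t.val, by have h := isStdTab_conj t.prop; rwa [hself] at h⟩

/-- For a self-conjugate shape, the linear involution `τ` of `S(μ)` with `v_t ↦ v_{t'}`. -/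
def selfTau {F : Type*} [Field F] {μ : YoungDiagram} (hself : μ.transpose = μ) (n : ℕ) :
    (StdTab μ n → F) →ₗ[F] (StdTab μ n → F) where
  toFun f := fun t => f (selfConjTab hself t)
  map_add' _ _ := rfl
  map_smul' _ _ := rfl

/-- `act` is the (right) seminormal representation of the Hecke algebra on the Specht
module `S(μ)`, with basis `{v_t}` indexed by the standard `μ`-tableaux, on which the
generators act by `v_t T_i = (−1/[ρ_t(i)]) v_t + α_t(i) v_{t·s_i}`. -/
def SpechtRep {F : Type*} [Field F] (q sqm1 : F) (sq : ℕ → F) (n : ℕ)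
    {H : Type*} [Ring H] [Algebra F H] (T : Equiv.Perm (Fin n) → H)
    (μ : YoungDiagram) (act : H →ₗ[F] Module.End F (StdTab μ n → F)) : Prop :=
  act 1 = 1 ∧ (∀ a b : H, act (a * b) = act b * act a) ∧
    ∀ (i : ℕ) (hi : i + 1 < n) (t : StdTab μ n),
      act (T (sTr n i)) (Pi.single t (1 : F) : StdTab μ n → F) =
        (-(qint q (rhoAx t.val i hi))⁻¹) • (Pi.single t (1 : F) : StdTab μ n → F) +
          (if h : IsStdTab μ (swapEnt t.val i hi) then
            alph q sqm1 sq (rhoAx t.val i hi) •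
              (Pi.single (⟨swapEnt t.val i hi, h⟩ : StdTab μ n) (1 : F) : StdTab μ n → F)
           else 0)


/-- Entry `m+1` lies on the diagonal of the tableau. -/
def onDiag {n : ℕ} (pos : Fin n → ℕ × ℕ) (m : ℕ) : Prop :=
  ∃ h : m < n, (pos ⟨m, h⟩).1 = (pos ⟨m, h⟩).2

/-- `t` is `w`-transposable: whenever entries `i` and `j` occupy diagonally opposite
cells of `t` then `j ∈ {i − 1, i + 1}` and `i`, `j` lie in the same cycle of `w`.
(Entries are 0-indexed here: index `k` is the entry `k+1`.) -/
def IsTransposable {n : ℕ} (w : Equiv.Perm (Fin n)) (pos : Fin n → ℕ × ℕ) : Prop :=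
  ∀ j k : Fin n, (pos j).1 ≠ (pos j).2 → pos k = ((pos j).2, (pos j).1) →
    ((k : ℕ) = (j : ℕ) + 1 ∨ (j : ℕ) = (k : ℕ) + 1) ∧ w.SameCycle j k

/-- The factor `γ_t(i_j)` of Definition `gamma` (0-indexed: `gam … pos u = γ_t(u+1)`):
`γ_t(i_j) = −1/[ρ_j]` if `i_j` is on the diagonal of `t`; `γ_t(i_j) = −1/[ρ'_j]` if
`c_t(i_j) = −c_t(i_j − 1)`; and `γ_t(i_j) = α_{ρ_j}` if `c_t(i_j) = −c_t(i_j + 1)`,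
where `ρ_j = c_t(i_j) − c_t(i_j+1)` and `ρ'_j = c_t(i_j−1) − c_t(i_j+1)`. -/
def gam {F : Type*} [Field F] (q sqm1 : F) (sq : ℕ → F) {n : ℕ}
    (pos : Fin n → ℕ × ℕ) (u : ℕ) : F :=
  if onDiag pos u then -(qint q (contN pos u - contN pos (u + 1)))⁻¹
  else if contN pos u = -(contN pos (u - 1)) then
    -(qint q (contN pos (u - 1) - contN pos (u + 1)))⁻¹
  else alph q sqm1 sq (contN pos u - contN pos (u + 1))

section TabAux

variable {μ : YoungDiagram} {n : ℕ}

lemma std_surj {pos : Fin n → ℕ × ℕ} (h : IsStdTab μ pos) (hμ : μ.card = n) :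
    ∀ c ∈ μ, ∃ k, pos k = c := by
  intro c hc
  have himg : (Finset.univ.image pos) ⊆ μ.cells := by
    intro x hx
    simp only [Finset.mem_image] at hx
    obtain ⟨k, _, rfl⟩ := hx
    exact (YoungDiagram.mem_cells _).2 (h.2.1 k)
  have hcard : μ.cells.card ≤ (Finset.univ.image pos).card := by
    rw [Finset.card_image_of_injective _ h.1, Finset.card_univ, Fintype.card_fin]
    exact le_of_eq hμ
  have heq := Finset.eq_of_subset_of_card_le himg hcard
  have : c ∈ Finset.univ.image pos := by
    rw [heq]; exact (YoungDiagram.mem_cells _).2 hc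
  simp only [Finset.mem_image] at this
  obtain ⟨k, _, hk⟩ := this
  exact ⟨k, hk⟩

lemma std_pos_zero {pos : Fin n → ℕ × ℕ} (h : IsStdTab μ pos) (hμ : μ.card = n)
    (hn : 0 < n) : pos ⟨0, hn⟩ = (0, 0) := by
  have h00 : (0, 0) ∈ μ := by
    have := h.2.1 ⟨0, hn⟩
    exact μ.up_left_mem (Nat.zero_le _) (Nat.zero_le _) this
  obtain ⟨e, he⟩ := std_surj h hμ _ h00
  by_contra hne
  have : e < ⟨0, hn⟩ := by
    refine h.2.2 e ⟨0, hn⟩ ?_ ?_ ?_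
    · rw [he]; exact Nat.zero_le _
    · rw [he]; exact Nat.zero_le _
    · rw [he]; exact fun hc => hne hc.symm
  exact absurd this (by simp [Fin.lt_def])

lemma content_gap {pos : Fin n → ℕ × ℕ} (h : IsStdTab μ pos) (hμ : μ.card = n)
    {a b : Fin n} (hab : (a : ℕ) + 2 = (b : ℕ))
    (hc : ((pos a).2 : ℤ) - (pos a).1 = ((pos b).2 : ℤ) - (pos b).1) : False := by
  obtain ⟨hinj, hmem, hord⟩ := h
  have hAB : pos a ≠ pos b := fun hEq => by
    have := hinj hEq; rw [this] at hab; omega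
  have h1lt : (pos a).1 < (pos b).1 := by
    by_contra hle
    push_neg at hle
    have h2le : (pos b).2 ≤ (pos a).2 := by omega
    have := hord b a hle h2le (Ne.symm hAB)
    rw [Fin.lt_def] at this; omega
  have h2lt : (pos a).2 < (pos b).2 := by omega
  have hX : ((pos a).1, (pos a).2 + 1) ∈ μ := μ.up_left_mem (le_of_lt h1lt) h2lt (hmem b)
  have hY : ((pos b).1, (pos b).2 - 1) ∈ μ := μ.up_left_mem le_rfl (Nat.sub_le _ _) (hmem b)
  obtain ⟨x, hx⟩ := std_surj ⟨hinj, hmem, hord⟩ hμ _ hX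
  obtain ⟨y, hy⟩ := std_surj ⟨hinj, hmem, hord⟩ hμ _ hY
  have hax : a < x := by
    apply hord a x (by simp [hx]) (by simp [hx])
    rw [hx]; intro hc'; have := congrArg Prod.snd hc'; simp at this
  have hxb : x < b := by
    apply hord x b (by simp [hx]; omega) (by simp [hx]; omega)
    rw [hx]; intro hc'; have := congrArg Prod.fst hc'; simp at this; omega
  have hay : a < y := by
    apply hord a y (by simp [hy]; omega) (by simp [hy]; omega)
    rw [hy]; intro hc'; have := congrArg Prod.fst hc'; simp at this; omega
  have hyb : y < b := by
    apply hord y b (by simp [hy]) (by simp [hy])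
    rw [hy]; intro hc'; have := congrArg Prod.snd hc'; simp at this; omega
  have hxy : x = y := by
    rw [Fin.lt_def] at hax hxb hay hyb
    exact Fin.ext (by omega)
  rw [hxy, hy] at hx
  have := congrArg Prod.fst hx
  simp at this; omega

lemma swap_std {pos : Fin n → ℕ × ℕ} (h : IsStdTab μ pos) {i : ℕ} (hi : i + 1 < n)
    (h1 : ¬((pos ⟨i, Nat.lt_of_succ_lt hi⟩).1 ≤ (pos ⟨i + 1, hi⟩).1 ∧
        (pos ⟨i, Nat.lt_of_succ_lt hi⟩).2 ≤ (pos ⟨i + 1, hi⟩).2))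
    (h2 : ¬((pos ⟨i + 1, hi⟩).1 ≤ (pos ⟨i, Nat.lt_of_succ_lt hi⟩).1 ∧
        (pos ⟨i + 1, hi⟩).2 ≤ (pos ⟨i, Nat.lt_of_succ_lt hi⟩).2)) :
    IsStdTab μ (swapEnt pos i hi) := by
  have hfine : (⟨i, Nat.lt_of_succ_lt hi⟩ : Fin n) ≠ ⟨i + 1, hi⟩ := by
    intro hc; have := congrArg Fin.val hc; simp at this
  refine ⟨h.1.comp (Equiv.swap _ _).injective, fun k => h.2.1 _, ?_⟩
  intro a b c1 c2 cne
  have c1' : (pos (Equiv.swap ⟨i, Nat.lt_of_succ_lt hi⟩ ⟨i + 1, hi⟩ a)).1 ≤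
      (pos (Equiv.swap ⟨i, Nat.lt_of_succ_lt hi⟩ ⟨i + 1, hi⟩ b)).1 := c1
  have c2' : (pos (Equiv.swap ⟨i, Nat.lt_of_succ_lt hi⟩ ⟨i + 1, hi⟩ a)).2 ≤
      (pos (Equiv.swap ⟨i, Nat.lt_of_succ_lt hi⟩ ⟨i + 1, hi⟩ b)).2 := c2
  have cne' : pos (Equiv.swap ⟨i, Nat.lt_of_succ_lt hi⟩ ⟨i + 1, hi⟩ a) ≠
      pos (Equiv.swap ⟨i, Nat.lt_of_succ_lt hi⟩ ⟨i + 1, hi⟩ b) := cne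
  have key := h.2.2 _ _ c1' c2' cne'
  rw [Fin.lt_def] at key ⊢
  by_cases ha : a = ⟨i, Nat.lt_of_succ_lt hi⟩
  · by_cases hb : b = ⟨i + 1, hi⟩
    · exfalso
      apply h2
      rw [ha, hb, Equiv.swap_apply_left, Equiv.swap_apply_right] at c1' c2'
      exact ⟨c1', c2'⟩
    · by_cases hb' : b = ⟨i, Nat.lt_of_succ_lt hi⟩
      · exact (cne' (by rw [ha, hb'])).elim
      · rw [ha, Equiv.swap_apply_left,
          Equiv.swap_apply_of_ne_of_ne hb' hb] at key
        have : (a : ℕ) = i := by rw [ha]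
        simp only [Fin.val_mk] at key
        omega
  · by_cases ha' : a = ⟨i + 1, hi⟩
    · by_cases hb : b = ⟨i, Nat.lt_of_succ_lt hi⟩
      · exfalso
        apply h1
        rw [ha', hb, Equiv.swap_apply_left, Equiv.swap_apply_right] at c1' c2'
        exact ⟨c1', c2'⟩
      · by_cases hb' : b = ⟨i + 1, hi⟩
        · exact (cne' (by rw [ha', hb'])).elim
        · rw [ha', Equiv.swap_apply_right,
            Equiv.swap_apply_of_ne_of_ne hb hb'] at key
          have ha1 : (a : ℕ) = i + 1 := by rw [ha']
          have hbne : (b : ℕ) ≠ i + 1 := fun hc => hb' (Fin.ext hc)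
          simp only [Fin.val_mk] at key
          omega
    · rw [Equiv.swap_apply_of_ne_of_ne ha ha'] at key
      by_cases hb : b = ⟨i, Nat.lt_of_succ_lt hi⟩
      · rw [hb, Equiv.swap_apply_left] at key
        have hb1 : (b : ℕ) = i := by rw [hb]
        have hane : (a : ℕ) ≠ i := fun hc => ha (Fin.ext hc)
        simp only [Fin.val_mk] at key
        omega
      · by_cases hb' : b = ⟨i + 1, hi⟩
        · rw [hb', Equiv.swap_apply_right] at key
          have hb1 : (b : ℕ) = i + 1 := by rw [hb']
          simp only [Fin.val_mk] at key
          omega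
        · rwa [Equiv.swap_apply_of_ne_of_ne hb hb'] at key

end TabAux
section PermAux

variable {n : ℕ}

lemma sTr_eq {i : ℕ} (hi : i + 1 < n) :
    sTr n i = Equiv.swap ⟨i, Nat.lt_of_succ_lt hi⟩ ⟨i + 1, hi⟩ := by
  rw [sTr, dif_pos hi]

lemma sTr_inv (i : ℕ) : (sTr n i)⁻¹ = sTr n i := by
  rw [sTr]
  split
  · exact Equiv.swap_inv _ _
  · rfl

lemma prodS_fix (l : List ℕ) (hval : ∀ i ∈ l, i + 1 < n) {x : Fin n}
    (hx : ∀ i ∈ l, (x : ℕ) < i) : (l.map (sTr n)).prod x = x := by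
  induction l with
  | nil => simp
  | cons i r ih =>
    have hi := hval i (by simp)
    have hxi := hx i (by simp)
    rw [List.map_cons, List.prod_cons, Equiv.Perm.mul_apply,
      ih (fun j hj => hval j (by simp [hj])) (fun j hj => hx j (by simp [hj])), sTr_eq hi,
      Equiv.swap_apply_of_ne_of_ne]
    · intro hc; have := congrArg Fin.val hc; simp at this; omega
    · intro hc; have := congrArg Fin.val hc; simp at this; omega

lemma prodS_apply_mem {l : List ℕ} (hpw : l.Pairwise (· < ·))
    (hval : ∀ i ∈ l, i + 1 < n) {j : ℕ} (hj : j ∈ l) (hjn : j + 1 < n) :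
    (l.map (sTr n)).prod ⟨j, Nat.lt_of_succ_lt hjn⟩ = ⟨j + 1, hjn⟩ := by
  induction l with
  | nil => cases hj
  | cons i r ih =>
    rw [List.map_cons, List.prod_cons, Equiv.Perm.mul_apply]
    rcases List.mem_cons.1 hj with rfl | hjr
    · rw [prodS_fix r (fun m hm => hval m (by simp [hm]))
        (fun m hm => (List.pairwise_cons.1 hpw).1 m hm), sTr_eq hjn]
      exact Equiv.swap_apply_left _ _
    · have hij : i < j := (List.pairwise_cons.1 hpw).1 j hjr
      rw [ih (List.pairwise_cons.1 hpw).2 (fun m hm => hval m (by simp [hm])) hjr,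
        sTr_eq (hval i (by simp)), Equiv.swap_apply_of_ne_of_ne]
      · intro hc; simp only [Fin.mk.injEq] at hc; omega
      · intro hc; simp only [Fin.mk.injEq] at hc; omega

lemma sTr_val_bound {i j : ℕ} (hij : i ≠ j) {x : Fin n} (hx : (x : ℕ) ≤ j) :
    ((sTr n i x : Fin n) : ℕ) ≤ j := by
  rw [sTr]
  split
  · rename_i hi
    by_cases h1 : x = ⟨i, Nat.lt_of_succ_lt hi⟩
    · rw [h1, Equiv.swap_apply_left]
      have hx' : (x : ℕ) = i := by rw [h1]
      have hv : ((⟨i + 1, hi⟩ : Fin n) : ℕ) = i + 1 := rfl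
      rw [hv]; omega
    · by_cases h2 : x = ⟨i + 1, hi⟩
      · rw [h2, Equiv.swap_apply_right]
        have hx' : (x : ℕ) = i + 1 := by rw [h2]
        have hv : ((⟨i, Nat.lt_of_succ_lt hi⟩ : Fin n) : ℕ) = i := rfl
        rw [hv]; omega
      · rw [Equiv.swap_apply_of_ne_of_ne h1 h2]; exact hx
  · exact hx

lemma prodS_bound {l : List ℕ} {j : ℕ} (hj : j ∉ l) {x : Fin n}
    (hx : (x : ℕ) ≤ j) : (((l.map (sTr n)).prod x : Fin n) : ℕ) ≤ j := by
  induction l with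
  | nil => simpa using hx
  | cons i r ih =>
    rw [List.map_cons, List.prod_cons, Equiv.Perm.mul_apply]
    exact sTr_val_bound (fun hc => hj (by simp [hc])) (ih (fun hc => hj (by simp [hc])))

lemma prodS_inv_bound {l : List ℕ} {j : ℕ} (hj : j ∉ l) {x : Fin n}
    (hx : (x : ℕ) ≤ j) : ((((l.map (sTr n)).prod)⁻¹ x : Fin n) : ℕ) ≤ j := by
  have h1 : ((l.map (sTr n)).prod)⁻¹ = (l.reverse.map (sTr n)).prod := by
    rw [List.prod_inv_reverse, List.map_map]
    have h2 : l.map ((fun x : Equiv.Perm (Fin n) => x⁻¹) ∘ sTr n) = l.map (sTr n) :=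
      List.map_congr_left (fun i _ => sTr_inv i)
    rw [h2, ← List.map_reverse]
  rw [h1]
  exact prodS_bound (by simpa using hj) hx

lemma perm_pow_bound {w : Equiv.Perm (Fin n)} {j : ℕ}
    (hw : ∀ x : Fin n, (x : ℕ) ≤ j → ((w x : Fin n) : ℕ) ≤ j) (k : ℕ) :
    ∀ x : Fin n, (x : ℕ) ≤ j → (((w ^ k) x : Fin n) : ℕ) ≤ j := by
  induction k with
  | zero => intro x hx; simpa using hx
  | succ m ih =>
    intro x hx
    rw [pow_succ, Equiv.Perm.mul_apply]
    exact ih _ (hw x hx)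

lemma prodS_zpow_bound {l : List ℕ} {j : ℕ} (hj : j ∉ l) (z : ℤ) {x : Fin n}
    (hx : (x : ℕ) ≤ j) : ((((l.map (sTr n)).prod ^ z) x : Fin n) : ℕ) ≤ j := by
  rcases z with k | k
  · rw [Int.ofNat_eq_coe, zpow_natCast]
    exact perm_pow_bound (fun y hy => prodS_bound hj hy) k x hx
  · rw [zpow_negSucc, ← inv_pow]
    exact perm_pow_bound (fun y hy => prodS_inv_bound hj hy) (k + 1) x hx

lemma not_sameCycle_of_not_mem {l : List ℕ} {j : ℕ} (hj : j ∉ l) (hjn : j + 1 < n) :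
    ¬ ((l.map (sTr n)).prod).SameCycle ⟨j, Nat.lt_of_succ_lt hjn⟩ ⟨j + 1, hjn⟩ := by
  rintro ⟨z, hz⟩
  have h0 : ((⟨j, Nat.lt_of_succ_lt hjn⟩ : Fin n) : ℕ) ≤ j := le_of_eq rfl
  have hb := prodS_zpow_bound hj z h0
  rw [hz] at hb
  have hv : ((⟨j + 1, hjn⟩ : Fin n) : ℕ) = j + 1 := rfl
  rw [hv] at hb
  omega

end PermAux

section HeckeAux

variable {n : ℕ}

lemma len_le_list (l : List ℕ) (hval : ∀ i ∈ l, i + 1 < n) :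
    len n ((l.map (sTr n)).prod) ≤ l.length :=
  Nat.sInf_le ⟨l, rfl, hval, rfl⟩

lemma T_prod {H : Type*} [Ring H] (T : Equiv.Perm (Fin n) → H) (hT1 : T 1 = 1)
    (hmul1 : ∀ (w : Equiv.Perm (Fin n)) (i : ℕ), i + 1 < n →
      len n (w * sTr n i) = len n w + 1 → T w * T (sTr n i) = T (w * sTr n i))
    (l : List ℕ) (hval : ∀ i ∈ l, i + 1 < n)
    (hlen : len n ((l.map (sTr n)).prod) = l.length) :
    T ((l.map (sTr n)).prod) = (l.map (fun i => T (sTr n i))).prod := by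
  induction l using List.reverseRecOn with
  | nil => simpa using hT1
  | append_singleton l0 i ih =>
    have hi : i + 1 < n := hval i (by simp)
    have hsplit : ((l0 ++ [i]).map (sTr n)).prod = (l0.map (sTr n)).prod * sTr n i := by
      rw [List.map_append, List.prod_append]; simp
    have h0le : len n ((l0.map (sTr n)).prod) ≤ l0.length :=
      len_le_list l0 (fun m hm => hval m (by simp [hm]))
    have hne : {k | ∃ m : List ℕ, m.length = k ∧ (∀ i ∈ m, i + 1 < n) ∧
        (l0.map (sTr n)).prod = (m.map (sTr n)).prod}.Nonempty :=
      ⟨l0.length, l0, rfl, fun m hm => hval m (by simp [hm]), rfl⟩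
    obtain ⟨m, hmlen, hmval, hmeq⟩ := Nat.sInf_mem hne
    have hstep : len n ((l0.map (sTr n)).prod * sTr n i) ≤ len n ((l0.map (sTr n)).prod) + 1 := by
      have : (l0.map (sTr n)).prod * sTr n i = ((m ++ [i]).map (sTr n)).prod := by
        rw [List.map_append, List.prod_append, ← hmeq]; simp
      rw [this]
      calc len n (((m ++ [i]).map (sTr n)).prod) ≤ (m ++ [i]).length :=
            len_le_list _ (by intro x hx; rcases List.mem_append.1 hx with h | h
                              · exact hmval x h
                              · simp at h; omega)
        _ = len n ((l0.map (sTr n)).prod) + 1 := by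
            rw [List.length_append, List.length_singleton, hmlen]; rfl
    rw [hsplit] at hlen
    have hlen0 : len n ((l0.map (sTr n)).prod) = l0.length := by
      simp only [List.length_append, List.length_singleton] at hlen
      omega
    have hlen1 : len n ((l0.map (sTr n)).prod * sTr n i) = len n ((l0.map (sTr n)).prod) + 1 := by
      simp only [List.length_append, List.length_singleton] at hlen
      omega
    rw [hsplit, ← hmul1 _ i hi hlen1, ih (fun m hm => hval m (by simp [hm])) hlen0]
    rw [List.map_append, List.prod_append]
    simp

end HeckeAux
section EAux

variable {F : Type*} [Field F] (q sqm1 : F) (sq : ℕ → F) {μ : YoungDiagram} {n : ℕ}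

/-- The coefficient of `v_u` in `v_s T_{i₁} ⋯ T_{i_k}`, computed by the seminormal
recursion. -/
def Ecoef (u : StdTab μ n) : List ℕ → StdTab μ n → F
  | [], s => if s = u then 1 else 0
  | i :: r, s =>
    if hi : i + 1 < n then
      -(qint q (rhoAx s.val i hi))⁻¹ * Ecoef u r s +
        (if h : IsStdTab μ (swapEnt s.val i hi) then
          alph q sqm1 sq (rhoAx s.val i hi) * Ecoef u r ⟨swapEnt s.val i hi, h⟩ else 0)
    else 0

lemma act_eq_Ecoef {H : Type*} [Ring H] [Algebra F H] (T : Equiv.Perm (Fin n) → H)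
    (act : H →ₗ[F] Module.End F (StdTab μ n → F)) (hact : SpechtRep q sqm1 sq n T μ act)
    (l : List ℕ) (hval : ∀ i ∈ l, i + 1 < n) (s u : StdTab μ n) :
    act ((l.map (fun i => T (sTr n i))).prod) (Pi.single s (1 : F)) u
      = Ecoef q sqm1 sq u l s := by
  induction l generalizing s with
  | nil =>
    simp only [List.map_nil, List.prod_nil, hact.1, Ecoef]
    rw [Module.End.one_apply, Pi.single_apply]
    simp [eq_comm]
  | cons i r ih =>
    have hi := hval i (by simp)
    rw [List.map_cons, List.prod_cons, hact.2.1, Module.End.mul_apply, hact.2.2 i hi s]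
    simp only [Ecoef, dif_pos hi]
    rw [map_add, map_smul, Pi.add_apply, Pi.smul_apply, smul_eq_mul,
      ih (fun j hj => hval j (by simp [hj])) s]
    congr 1
    by_cases h : IsStdTab μ (swapEnt s.val i hi)
    · rw [dif_pos h, dif_pos h, map_smul, Pi.smul_apply, smul_eq_mul,
        ih (fun j hj => hval j (by simp [hj])) ⟨swapEnt s.val i hi, h⟩]
    · rw [dif_neg h, dif_neg h, map_zero, Pi.zero_apply]

lemma Ecoef_vanish (u : StdTab μ n) (l : List ℕ) (s : StdTab μ n) {k : Fin n}
    (hk : ∀ j ∈ l, (k : ℕ) < j) (hne : s.val k ≠ u.val k) :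
    Ecoef q sqm1 sq u l s = 0 := by
  induction l generalizing s with
  | nil =>
    rw [Ecoef, if_neg]
    intro hc
    exact hne (by rw [hc])
  | cons i r ih =>
    have hki : (k : ℕ) < i := hk i (by simp)
    rw [Ecoef]
    split
    · rename_i hi
      rw [ih s (fun j hj => hk j (by simp [hj])) hne, mul_zero, zero_add]
      split
      · rename_i h
        have hsk : swapEnt s.val i hi k = s.val k := by
          show s.val (Equiv.swap ⟨i, Nat.lt_of_succ_lt hi⟩ ⟨i + 1, hi⟩ k) = s.val k
          rw [Equiv.swap_apply_of_ne_of_ne]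
          · intro hc; have h2 : (k : ℕ) = i := by rw [hc]
            omega
          · intro hc; have h2 : (k : ℕ) = i + 1 := by rw [hc]
            omega
        rw [ih ⟨swapEnt s.val i hi, h⟩ (fun j hj => hk j (by simp [hj]))
          (by show swapEnt s.val i hi k ≠ u.val k
              rw [hsk]; exact hne), mul_zero]
      · rfl
    · rfl

lemma Ecoef_low (u : StdTab μ n) (l : List ℕ) (s : StdTab μ n)
    (hne0 : Ecoef q sqm1 sq u l s ≠ 0) {a : Fin n} (ha : ∀ j ∈ l, (a : ℕ) < j) :
    s.val a = u.val a := by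
  by_contra hne
  exact hne0 (Ecoef_vanish q sqm1 sq u l s ha hne)

lemma Ecoef_split {u : StdTab μ n} {i : ℕ} {r : List ℕ} {s : StdTab μ n}
    (hne0 : Ecoef q sqm1 sq u (i :: r) s ≠ 0) :
    ∃ hi : i + 1 < n, Ecoef q sqm1 sq u r s ≠ 0 ∨
      (∃ h : IsStdTab μ (swapEnt s.val i hi),
        Ecoef q sqm1 sq u r (⟨swapEnt s.val i hi, h⟩ : StdTab μ n) ≠ 0) := by
  rw [Ecoef] at hne0
  by_cases hi : i + 1 < n
  · refine ⟨hi, ?_⟩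
    rw [dif_pos hi] at hne0
    by_cases h1 : Ecoef q sqm1 sq u r s = 0
    · right
      rw [h1, mul_zero, zero_add] at hne0
      by_cases h : IsStdTab μ (swapEnt s.val i hi)
      · refine ⟨h, ?_⟩
        rw [dif_pos h] at hne0
        intro hc
        rw [hc, mul_zero] at hne0
        exact hne0 rfl
      · rw [dif_neg h] at hne0
        exact absurd rfl hne0
    · exact Or.inl h1
  · rw [dif_neg hi] at hne0
    exact absurd rfl hne0

lemma Ecoef_entry_bound (u : StdTab μ n) (l : List ℕ) (s : StdTab μ n)
    (hpw : l.Pairwise (· < ·)) (hne0 : Ecoef q sqm1 sq u l s ≠ 0)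
    {a b : Fin n} (hab : u.val a = s.val b) : (b : ℕ) ≤ (a : ℕ) + 1 := by
  induction l generalizing s b with
  | nil =>
    rw [Ecoef] at hne0
    have hsu : s = u := by
      by_contra hc
      rw [if_neg hc] at hne0
      exact hne0 rfl
    subst hsu
    have : a = b := s.prop.1 hab
    omega
  | cons i r ih =>
    obtain ⟨hi, hcase⟩ := Ecoef_split q sqm1 sq hne0
    by_cases hai : (a : ℕ) < i
    · have := Ecoef_low q sqm1 sq u (i :: r) s hne0 (a := a)
        (by intro j hj
            rcases List.mem_cons.1 hj with rfl | hj
            · exact hai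
            · exact lt_trans hai ((List.pairwise_cons.1 hpw).1 j hj))
      rw [← this] at hab
      have : a = b := s.prop.1 hab
      omega
    · push_neg at hai
      rcases hcase with h1 | ⟨h, h2⟩
      · exact ih s (List.pairwise_cons.1 hpw).2 h1 hab
      · by_cases hb1 : b = ⟨i, Nat.lt_of_succ_lt hi⟩
        · have : (b : ℕ) = i := by rw [hb1]
          omega
        · by_cases hb2 : b = ⟨i + 1, hi⟩
          · have : (b : ℕ) = i + 1 := by rw [hb2]
            omega
          · have hsb : (⟨swapEnt s.val i hi, h⟩ : StdTab μ n).val b = s.val b := by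
              show s.val (Equiv.swap ⟨i, Nat.lt_of_succ_lt hi⟩ ⟨i + 1, hi⟩ b) = s.val b
              rw [Equiv.swap_apply_of_ne_of_ne hb1 hb2]
            exact ih ⟨swapEnt s.val i hi, h⟩ (List.pairwise_cons.1 hpw).2 h2
              (by rw [hab, ← hsb])

lemma Ecoef_swap_mem (u : StdTab μ n) (l : List ℕ) (s : StdTab μ n)
    (hpw : l.Pairwise (· < ·)) (hne0 : Ecoef q sqm1 sq u l s ≠ 0)
    {a : ℕ} (ha : a + 1 < n)
    (hab : u.val ⟨a, Nat.lt_of_succ_lt ha⟩ = s.val ⟨a + 1, ha⟩) : a ∈ l := by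
  induction l generalizing s with
  | nil =>
    rw [Ecoef] at hne0
    have hsu : s = u := by
      by_contra hc
      rw [if_neg hc] at hne0
      exact hne0 rfl
    subst hsu
    have := s.prop.1 hab
    simp only [Fin.mk.injEq] at this
    omega
  | cons i r ih =>
    obtain ⟨hi, hcase⟩ := Ecoef_split q sqm1 sq hne0
    by_cases hia : a = i
    · simp [hia]
    · by_cases hai : a < i
      · exfalso
        have hlow := Ecoef_low q sqm1 sq u (i :: r) s hne0 (a := ⟨a, Nat.lt_of_succ_lt ha⟩)
          (by intro j hj
              rcases List.mem_cons.1 hj with rfl | hj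
              · exact hai
              · exact lt_trans hai ((List.pairwise_cons.1 hpw).1 j hj))
        rw [← hlow] at hab
        have := s.prop.1 hab
        simp only [Fin.mk.injEq] at this
        omega
      · have hlt : i < a := by omega
        rcases hcase with h1 | ⟨h, h2⟩
        · exact List.mem_cons.2 (Or.inr (ih s (List.pairwise_cons.1 hpw).2 h1 hab))
        · have hsb : (⟨swapEnt s.val i hi, h⟩ : StdTab μ n).val ⟨a + 1, ha⟩
              = s.val ⟨a + 1, ha⟩ := by
            show s.val (Equiv.swap ⟨i, Nat.lt_of_succ_lt hi⟩ ⟨i + 1, hi⟩ ⟨a + 1, ha⟩)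
              = s.val ⟨a + 1, ha⟩
            rw [Equiv.swap_apply_of_ne_of_ne]
            · intro hc; simp only [Fin.mk.injEq] at hc; omega
            · intro hc; simp only [Fin.mk.injEq] at hc; omega
          exact List.mem_cons.2 (Or.inr (ih ⟨swapEnt s.val i hi, h⟩
            (List.pairwise_cons.1 hpw).2 h2 (by rw [hab, ← hsb])))

end EAux
section DpAux

variable {μ : YoungDiagram} {n : ℕ}

/-- Entries `j+1`, `j+2` occupy diagonally opposite (off-diagonal) cells. -/
def DiagPair {n : ℕ} (pos : Fin n → ℕ × ℕ) (j : ℕ) : Prop :=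
  ∃ hj : j + 1 < n,
    (pos ⟨j, Nat.lt_of_succ_lt hj⟩).1 ≠ (pos ⟨j, Nat.lt_of_succ_lt hj⟩).2 ∧
    pos ⟨j + 1, hj⟩ = ((pos ⟨j, Nat.lt_of_succ_lt hj⟩).2, (pos ⟨j, Nat.lt_of_succ_lt hj⟩).1)

lemma diagPair_not_consec {pos : Fin n → ℕ × ℕ} (hinj : Function.Injective pos)
    {j : ℕ} (h1 : DiagPair pos j) (h2 : DiagPair pos (j + 1)) : False := by
  obtain ⟨p1, hoff1, hpair1⟩ := h1
  obtain ⟨p2, hoff2, hpair2⟩ := h2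
  have e1 : pos ⟨j + 1, Nat.lt_of_succ_lt p2⟩ = pos ⟨j + 1, p1⟩ := rfl
  rw [e1, hpair1] at hpair2
  have : pos ⟨j + 1 + 1, p2⟩ = pos ⟨j, Nat.lt_of_succ_lt p1⟩ := by
    rw [hpair2]
  have := hinj this
  simp only [Fin.mk.injEq] at this
  omega

lemma diagPair_succ_offdiag {pos : Fin n → ℕ × ℕ} {j : ℕ} (h : DiagPair pos j)
    {p : j + 1 < n} : (pos ⟨j + 1, p⟩).1 ≠ (pos ⟨j + 1, p⟩).2 := by
  obtain ⟨p1, hoff, hpair⟩ := h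
  have e1 : pos ⟨j + 1, p⟩ = pos ⟨j + 1, p1⟩ := rfl
  rw [e1, hpair]
  exact fun hc => hoff hc.symm

lemma diagPair_zero_false {pos : Fin n → ℕ × ℕ} (h : IsStdTab μ pos) (hμ : μ.card = n) :
    ¬ DiagPair pos 0 := by
  rintro ⟨p1, hoff, -⟩
  have h0 : pos ⟨0, Nat.lt_of_succ_lt p1⟩ = (0, 0) := std_pos_zero h hμ _
  rw [h0] at hoff
  exact hoff rfl

lemma diagPair_pos {pos : Fin n → ℕ × ℕ} (h : IsStdTab μ pos) (hμ : μ.card = n)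
    {j : ℕ} (hd : DiagPair pos j) : 1 ≤ j := by
  rcases Nat.eq_zero_or_pos j with rfl | h1
  · exact absurd hd (diagPair_zero_false h hμ)
  · exact h1

lemma contN_eq {pos : Fin n → ℕ × ℕ} {m : ℕ} (hm : m < n) :
    contN pos m = ((pos ⟨m, hm⟩).2 : ℤ) - ((pos ⟨m, hm⟩).1 : ℤ) := dif_pos hm

end DpAux

section SwapAux

variable {n : ℕ}

lemma swapEnt_left {pos : Fin n → ℕ × ℕ} {i : ℕ} (hi : i + 1 < n) :
    swapEnt pos i hi ⟨i, Nat.lt_of_succ_lt hi⟩ = pos ⟨i + 1, hi⟩ := by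
  show pos (Equiv.swap _ _ _) = _
  rw [Equiv.swap_apply_left]

lemma swapEnt_right {pos : Fin n → ℕ × ℕ} {i : ℕ} (hi : i + 1 < n) :
    swapEnt pos i hi ⟨i + 1, hi⟩ = pos ⟨i, Nat.lt_of_succ_lt hi⟩ := by
  show pos (Equiv.swap _ _ _) = _
  rw [Equiv.swap_apply_right]

lemma swapEnt_other {pos : Fin n → ℕ × ℕ} {i : ℕ} (hi : i + 1 < n) {k : Fin n}
    (h1 : k ≠ ⟨i, Nat.lt_of_succ_lt hi⟩) (h2 : k ≠ ⟨i + 1, hi⟩) :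
    swapEnt pos i hi k = pos k := by
  show pos (Equiv.swap _ _ _) = _
  rw [Equiv.swap_apply_of_ne_of_ne h1 h2]

lemma not_onDiag_of {pos : Fin n → ℕ × ℕ} {i : ℕ} (h : i < n)
    (hne : (pos ⟨i, h⟩).1 ≠ (pos ⟨i, h⟩).2) : ¬ onDiag pos i := by
  rintro ⟨h', he⟩
  exact hne he

end SwapAux
section PosMain

variable {F : Type*} [Field F] (q sqm1 : F) (sq : ℕ → F) {μ : YoungDiagram} {n : ℕ}

lemma Ecoef_pos (t u : StdTab μ n) (hμ : μ.card = n)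
    (hu : ∀ k : Fin n, u.val k = ((t.val k).2, (t.val k).1))
    (hTri : ∀ k : Fin n, (t.val k).1 = (t.val k).2 ∨ DiagPair t.val (k : ℕ) ∨
      (1 ≤ (k : ℕ) ∧ DiagPair t.val ((k : ℕ) - 1)))
    (l : List ℕ) (hpw : l.Pairwise (· < ·)) (hval : ∀ i ∈ l, i + 1 < n)
    (hD : ∀ j : ℕ, DiagPair t.val j → j ∈ l ∨ ∀ m ∈ l, j < m)
    (s : StdTab μ n)
    (hs : ∀ k : Fin n, s.val k =
      if (DiagPair t.val (k : ℕ) ∧ (k : ℕ) ∈ l) ∨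
         (1 ≤ (k : ℕ) ∧ DiagPair t.val ((k : ℕ) - 1) ∧ ((k : ℕ) - 1) ∈ l)
      then t.val k else ((t.val k).2, (t.val k).1)) :
    Ecoef q sqm1 sq u l s = (l.map (gam q sqm1 sq t.val)).prod := by
  induction l generalizing s with
  | nil =>
    have hsu : s = u := by
      apply Subtype.ext; funext k
      have hcond : ¬ ((DiagPair t.val (k : ℕ) ∧ (k : ℕ) ∈ ([] : List ℕ)) ∨
          (1 ≤ (k : ℕ) ∧ DiagPair t.val ((k : ℕ) - 1) ∧ ((k : ℕ) - 1) ∈ ([] : List ℕ))) := by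
        rintro (⟨-, hk⟩ | ⟨-, -, hk⟩) <;> exact absurd hk List.not_mem_nil
      rw [hs k, if_neg hcond, hu k]
    rw [Ecoef, if_pos hsu]
    simp
  | cons i r ih =>
    have hii : i + 1 < n := hval i (by simp)
    have hin : i < n := Nat.lt_of_succ_lt hii
    have hvr : ∀ j ∈ r, j + 1 < n := fun j hj => hval j (by simp [hj])
    have hpwr : r.Pairwise (· < ·) := (List.pairwise_cons.1 hpw).2
    have hhead : ∀ m ∈ r, i < m := (List.pairwise_cons.1 hpw).1
    have hinr : i ∉ r := fun hc => lt_irrefl i (hhead i hc)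
    have hDr : ∀ j : ℕ, DiagPair t.val j → j ∈ r ∨ ∀ m ∈ r, j < m := by
      intro j hdj
      rcases hD j hdj with hm | hlt
      · rcases List.mem_cons.1 hm with rfl | hm
        · exact Or.inr hhead
        · exact Or.inl hm
      · exact Or.inr fun m hm => hlt m (List.mem_cons_of_mem _ hm)
    -- the (i+1)-st entry of s sits where it sits in t, in every case
    have hsfi1 : s.val ⟨i + 1, hii⟩ = t.val ⟨i + 1, hii⟩ := by
      rw [hs ⟨i + 1, hii⟩]
      split
      · rfl
      · rename_i hcond
        rcases hTri ⟨i + 1, hii⟩ with hdiag | hdp | ⟨-, hdp⟩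
        · exact Prod.ext_iff.mpr ⟨hdiag.symm, hdiag⟩
        · exfalso
          have hdp' : DiagPair t.val (i + 1) := hdp
          rcases hD (i + 1) hdp' with hm | hlt
          · rcases List.mem_cons.1 hm with heq | hm
            · omega
            · exact hcond (Or.inl ⟨hdp, by
                show i + 1 ∈ i :: r
                exact List.mem_cons_of_mem _ hm⟩)
          · have := hlt i (by simp)
            omega
        · exfalso
          have hdp' : DiagPair t.val i := by
            have hv : ((⟨i + 1, hii⟩ : Fin n) : ℕ) - 1 = i := by simp
            rwa [hv] at hdp
          exact hcond (Or.inr ⟨by simp, by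
            show DiagPair t.val ((i + 1) - 1)
            simpa using hdp', by
            show (i + 1) - 1 ∈ i :: r
            simp⟩)
    rcases hTri ⟨i, hin⟩ with hdiag | hdp | ⟨h1i0, hdpm0⟩
    -- ============ CASE A : entry i+1 on the diagonal ============
    · have hDpfi : ¬ DiagPair t.val i := by
        rintro ⟨p, hoff, -⟩
        exact hoff hdiag
      have hDpfim : ∀ h1 : 1 ≤ i, ¬ DiagPair t.val (i - 1) := by
        intro h1 hdp
        obtain ⟨p, hoff, hpair⟩ := hdp
        have efi : (⟨i - 1 + 1, p⟩ : Fin n) = ⟨i, hin⟩ := Fin.ext (by simp; omega)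
        have : (t.val ⟨i - 1 + 1, p⟩).1 ≠ (t.val ⟨i - 1 + 1, p⟩).2 := by
          rw [hpair]; exact fun hc => hoff hc.symm
        rw [efi] at this
        exact this hdiag
      have hsfi : s.val ⟨i, hin⟩ = t.val ⟨i, hin⟩ := by
        rw [hs ⟨i, hin⟩, if_neg]
        · exact Prod.ext_iff.mpr ⟨hdiag.symm, hdiag⟩
        · rintro (⟨hdp, -⟩ | ⟨h1, hdp, -⟩)
          · exact hDpfi hdp
          · exact hDpfim h1 hdp
      have husfi : u.val ⟨i, hin⟩ = s.val ⟨i, hin⟩ := by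
        rw [hu ⟨i, hin⟩, hsfi]
        exact Prod.ext_iff.mpr ⟨hdiag.symm, hdiag⟩
      -- conditions for `r` agree with conditions for `i :: r`
      have hsr : ∀ k : Fin n, s.val k =
          if (DiagPair t.val (k : ℕ) ∧ (k : ℕ) ∈ r) ∨
             (1 ≤ (k : ℕ) ∧ DiagPair t.val ((k : ℕ) - 1) ∧ ((k : ℕ) - 1) ∈ r)
          then t.val k else ((t.val k).2, (t.val k).1) := by
        intro k
        rw [hs k]
        apply if_congr _ rfl rfl
        constructor
        · rintro (⟨hdp, hm⟩ | ⟨h1, hdp, hm⟩)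
          · rcases List.mem_cons.1 hm with heq | hm
            · exact absurd (heq ▸ hdp) hDpfi
            · exact Or.inl ⟨hdp, hm⟩
          · rcases List.mem_cons.1 hm with heq | hm
            · exact absurd (heq ▸ hdp) hDpfi
            · exact Or.inr ⟨h1, hdp, hm⟩
        · rintro (⟨hdp, hm⟩ | ⟨h1, hdp, hm⟩)
          · exact Or.inl ⟨hdp, List.mem_cons_of_mem _ hm⟩
          · exact Or.inr ⟨h1, hdp, List.mem_cons_of_mem _ hm⟩
      have hstay := ih hpwr hvr hDr s hsr
      have hrho : rhoAx s.val i hii = contN t.val i - contN t.val (i + 1) := by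
        rw [rhoAx, contN_eq hin, contN_eq hii, hsfi, hsfi1]
      have hswap0 : (if h : IsStdTab μ (swapEnt s.val i hii) then
          alph q sqm1 sq (rhoAx s.val i hii) *
            Ecoef q sqm1 sq u r (⟨swapEnt s.val i hii, h⟩ : StdTab μ n) else 0) = 0 := by
        split
        · rename_i h
          refine mul_eq_zero_of_right _ (Ecoef_vanish q sqm1 sq u r _ (k := ⟨i, hin⟩) hhead ?_)
          show swapEnt s.val i hii ⟨i, hin⟩ ≠ u.val ⟨i, hin⟩
          rw [swapEnt_left hii, husfi]
          intro hc
          have := s.prop.1 hc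
          simp only [Fin.mk.injEq] at this
          omega
        · rfl
      have hgam : gam q sqm1 sq t.val i =
          -(qint q (contN t.val i - contN t.val (i + 1)))⁻¹ := by
        rw [gam, if_pos ⟨hin, hdiag⟩]
      rw [Ecoef, dif_pos hii, hswap0, add_zero, hstay, hrho,
        List.map_cons, List.prod_cons, hgam]
    -- ============ CASE C : i is a pair index ============
    · have h1i : 1 ≤ i := diagPair_pos t.prop hμ hdp
      obtain ⟨p, hoff, hpair0⟩ := hdp
      have hpair : t.val ⟨i + 1, hii⟩ = ((t.val ⟨i, hin⟩).2, (t.val ⟨i, hin⟩).1) := hpair0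
      have hdp' : DiagPair t.val i := ⟨p, hoff, hpair0⟩
      have hoff' : (t.val ⟨i, hin⟩).1 ≠ (t.val ⟨i, hin⟩).2 := hoff
      have hDpm : ¬ DiagPair t.val (i - 1) := by
        intro hdm
        apply diagPair_not_consec t.prop.1 hdm
        rw [show i - 1 + 1 = i by omega]
        exact hdp'
      have hDp1 : ¬ DiagPair t.val (i + 1) := fun hd1 =>
        diagPair_not_consec t.prop.1 hdp' hd1
      have hsfi : s.val ⟨i, hin⟩ = t.val ⟨i, hin⟩ := by
        rw [hs ⟨i, hin⟩, if_pos]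
        exact Or.inl ⟨hdp', by show i ∈ i :: r; simp⟩
      have hune : u.val ⟨i, hin⟩ ≠ s.val ⟨i, hin⟩ := by
        rw [hu ⟨i, hin⟩, hsfi]
        intro hc
        exact hoff' (congrArg Prod.fst hc).symm
      have hstay0 : Ecoef q sqm1 sq u r s = 0 :=
        Ecoef_vanish q sqm1 sq u r s (k := ⟨i, hin⟩) hhead (fun hc => hune hc.symm)
      have hstd : IsStdTab μ (swapEnt s.val i hii) := by
        apply swap_std s.prop hii
        · rw [hsfi, hsfi1, hpair]
          rintro ⟨ha, hb⟩
          exact hoff' (le_antisymm ha hb)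
        · rw [hsfi, hsfi1, hpair]
          rintro ⟨ha, hb⟩
          exact hoff' (le_antisymm hb ha)
      have hrho : rhoAx s.val i hii = contN t.val i - contN t.val (i + 1) := by
        rw [rhoAx, contN_eq hin, contN_eq hii, hsfi, hsfi1]
      -- the swapped tableau satisfies the invariant for `r`
      have hs' : ∀ k : Fin n,
          (⟨swapEnt s.val i hii, hstd⟩ : StdTab μ n).val k =
          if (DiagPair t.val (k : ℕ) ∧ (k : ℕ) ∈ r) ∨
             (1 ≤ (k : ℕ) ∧ DiagPair t.val ((k : ℕ) - 1) ∧ ((k : ℕ) - 1) ∈ r)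
          then t.val k else ((t.val k).2, (t.val k).1) := by
        intro k
        show swapEnt s.val i hii k = _
        by_cases hk1 : k = ⟨i, hin⟩
        · subst hk1
          rw [swapEnt_left hii, hsfi1, hpair, if_neg]
          rintro (⟨hdpk, hm⟩ | ⟨h1, hdpk, hm⟩)
          · exact hinr hm
          · exact hDpm hdpk
        · by_cases hk2 : k = ⟨i + 1, hii⟩
          · subst hk2
            rw [swapEnt_right hii, hsfi, if_neg]
            · rw [hpair]
            · rintro (⟨hdpk, hm⟩ | ⟨h1, hdpk, hm⟩)
              · exact hDp1 (by simpa using hdpk)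
              · have hv : ((⟨i + 1, hii⟩ : Fin n) : ℕ) - 1 = i := by simp
                rw [hv] at hm
                exact hinr hm
          · rw [swapEnt_other hii hk1 hk2, hs k]
            apply if_congr _ rfl rfl
            have hkne : (k : ℕ) ≠ i := fun hc => hk1 (Fin.ext hc)
            have hkne1 : (k : ℕ) - 1 ≠ i ∨ (k : ℕ) = 0 := by
              by_cases h0 : (k : ℕ) = 0
              · exact Or.inr h0
              · left; intro hc
                exact hk2 (Fin.ext (show (k : ℕ) = i + 1 by omega))
            constructor
            · rintro (⟨hdpk, hm⟩ | ⟨h1, hdpk, hm⟩)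
              · rcases List.mem_cons.1 hm with heq | hm
                · exact absurd heq hkne
                · exact Or.inl ⟨hdpk, hm⟩
              · rcases List.mem_cons.1 hm with heq | hm
                · rcases hkne1 with hne | h0
                  · exact absurd heq hne
                  · omega
                · exact Or.inr ⟨h1, hdpk, hm⟩
            · rintro (⟨hdpk, hm⟩ | ⟨h1, hdpk, hm⟩)
              · exact Or.inl ⟨hdpk, List.mem_cons_of_mem _ hm⟩
              · exact Or.inr ⟨h1, hdpk, List.mem_cons_of_mem _ hm⟩
      have hswap := ih hpwr hvr hDr ⟨swapEnt s.val i hii, hstd⟩ hs'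
      have hgam : gam q sqm1 sq t.val i =
          alph q sqm1 sq (contN t.val i - contN t.val (i + 1)) := by
        rw [gam, if_neg (not_onDiag_of hin hoff'), if_neg]
        intro heq
        -- contents of entries i-1 and i+1 agree: contradiction with content_gap
        have hcp : contN t.val (i + 1) = -(contN t.val i) := by
          rw [contN_eq hii, contN_eq hin, hpair]
          ring
        have hgap : contN t.val (i - 1) = contN t.val (i + 1) := by
          rw [hcp]; linarith [heq]
        apply content_gap t.prop hμ (a := ⟨i - 1, by omega⟩) (b := ⟨i + 1, hii⟩)
          (by simp; omega)
        have e1 := (contN_eq (pos := t.val) (m := i - 1) (by omega)).symm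
        have e2 := (contN_eq (pos := t.val) (m := i + 1) hii).symm
        rw [e1, e2, hgap]
      rw [Ecoef, dif_pos hii, hstay0, mul_zero, zero_add, dif_pos hstd, hswap, hrho,
        List.map_cons, List.prod_cons, hgam]
    -- ============ CASE B : entry i+1 is conjugate to entry i ============
    · have h1i : 1 ≤ i := h1i0
      have hdpm : DiagPair t.val (i - 1) := hdpm0
      obtain ⟨p, hoffm, hpairm0⟩ := hdpm
      have hdpm' : DiagPair t.val (i - 1) := ⟨p, hoffm, hpairm0⟩
      have efi : (⟨i - 1 + 1, p⟩ : Fin n) = ⟨i, hin⟩ := Fin.ext (by simp; omega)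
      have hpairm : t.val ⟨i, hin⟩ =
          ((t.val ⟨i - 1, Nat.lt_of_succ_lt p⟩).2, (t.val ⟨i - 1, Nat.lt_of_succ_lt p⟩).1) := by
        rw [← efi]; exact hpairm0
      have hofffi : (t.val ⟨i, hin⟩).1 ≠ (t.val ⟨i, hin⟩).2 := by
        rw [hpairm]
        exact fun hc => hoffm hc.symm
      have hDpfi : ¬ DiagPair t.val i := by
        intro hd
        exact diagPair_not_consec t.prop.1 hdpm' (by rw [show i - 1 + 1 = i by omega]; exact hd)
      have hfimnotl : (i - 1) ∉ (i :: r) := by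
        intro hm
        rcases List.mem_cons.1 hm with heq | hm
        · omega
        · have := hhead _ hm; omega
      have hsfi : s.val ⟨i, hin⟩ = ((t.val ⟨i, hin⟩).2, (t.val ⟨i, hin⟩).1) := by
        rw [hs ⟨i, hin⟩, if_neg]
        rintro (⟨hdp, -⟩ | ⟨h1, hdp, hm⟩)
        · exact hDpfi hdp
        · exact hfimnotl (by simpa using hm)
      have husfi : u.val ⟨i, hin⟩ = s.val ⟨i, hin⟩ := by
        rw [hu ⟨i, hin⟩, hsfi]
      have hsr : ∀ k : Fin n, s.val k =
          if (DiagPair t.val (k : ℕ) ∧ (k : ℕ) ∈ r) ∨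
             (1 ≤ (k : ℕ) ∧ DiagPair t.val ((k : ℕ) - 1) ∧ ((k : ℕ) - 1) ∈ r)
          then t.val k else ((t.val k).2, (t.val k).1) := by
        intro k
        rw [hs k]
        apply if_congr _ rfl rfl
        constructor
        · rintro (⟨hdp, hm⟩ | ⟨h1, hdp, hm⟩)
          · rcases List.mem_cons.1 hm with heq | hm
            · exact absurd (heq ▸ hdp) hDpfi
            · exact Or.inl ⟨hdp, hm⟩
          · rcases List.mem_cons.1 hm with heq | hm
            · exact absurd (heq ▸ hdp) hDpfi
            · exact Or.inr ⟨h1, hdp, hm⟩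
        · rintro (⟨hdp, hm⟩ | ⟨h1, hdp, hm⟩)
          · exact Or.inl ⟨hdp, List.mem_cons_of_mem _ hm⟩
          · exact Or.inr ⟨h1, hdp, List.mem_cons_of_mem _ hm⟩
      have hstay := ih hpwr hvr hDr s hsr
      have hswap0 : (if h : IsStdTab μ (swapEnt s.val i hii) then
          alph q sqm1 sq (rhoAx s.val i hii) *
            Ecoef q sqm1 sq u r (⟨swapEnt s.val i hii, h⟩ : StdTab μ n) else 0) = 0 := by
        split
        · rename_i h
          refine mul_eq_zero_of_right _ (Ecoef_vanish q sqm1 sq u r _ (k := ⟨i, hin⟩) hhead ?_)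
          show swapEnt s.val i hii ⟨i, hin⟩ ≠ u.val ⟨i, hin⟩
          rw [swapEnt_left hii, husfi]
          intro hc
          have := s.prop.1 hc
          simp only [Fin.mk.injEq] at this
          omega
        · rfl
      have hrho : rhoAx s.val i hii =
          contN t.val (i - 1) - contN t.val (i + 1) := by
        rw [rhoAx, hsfi, hsfi1, contN_eq (pos := t.val) (m := i - 1) (Nat.lt_of_succ_lt p),
          contN_eq hii, hpairm]
      have hgam : gam q sqm1 sq t.val i =
          -(qint q (contN t.val (i - 1) - contN t.val (i + 1)))⁻¹ := by
        rw [gam, if_neg (not_onDiag_of hin hofffi), if_pos]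
        rw [contN_eq hin, contN_eq (pos := t.val) (m := i - 1) (Nat.lt_of_succ_lt p), hpairm]
        ring
      rw [Ecoef, dif_pos hii, hswap0, add_zero, hstay, hrho,
        List.map_cons, List.prod_cons, hgam]

end PosMain

/-- Proposition `factorization`: if `w = s_{i₁}⋯s_{i_k}` is reduced,
with `1 ≤ i₁ < ⋯ < i_k < n`, and `t` is a standard `λ`-tableau then the coefficient
`γ_t(w)` of `v_{t'}` in `v_t T_w` is `γ_t(i₁)⋯γ_t(i_k)` if `t` is `w`-transposable
and is `0` otherwise. -/
theorem gamma_factorization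
    {F : Type*} [Field F] (q : F) (hq0 : q ≠ 0) (hq1 : q ≠ 1) (n : ℕ)
    (hqint : ∀ k : ℕ, 1 ≤ k → k ≤ n → qint q (k : ℤ) ≠ 0)
    -- the chosen square roots √(−1) and √([k]) in F
    (sqm1 : F) (hsqm1 : sqm1 ^ 2 = -1)
    (sq : ℕ → F) (hsq0 : sq 0 = 0)
    (hsq : ∀ k : ℕ, 1 ≤ k → k ≤ n → sq k ^ 2 = qint q (k : ℤ))
    {H : Type*} [Ring H] [Algebra F H]
    -- the Iwahori–Hecke algebra of type A with its basis of standard elements T_w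
    (T : Equiv.Perm (Fin n) → H)
    (bT : Module.Basis (Equiv.Perm (Fin n)) F H) (hbT : ∀ w, bT w = T w)
    (hT1 : T 1 = 1)
    (hTunit : ∀ w, IsUnit (T w))
    (hmul1 : ∀ (w : Equiv.Perm (Fin n)) (i : ℕ), i + 1 < n →
      len n (w * sTr n i) = len n w + 1 → T w * T (sTr n i) = T (w * sTr n i))
    (hmul2 : ∀ (w : Equiv.Perm (Fin n)) (i : ℕ), i + 1 < n →
      len n (w * sTr n i) + 1 = len n w →
      T w * T (sTr n i) = T (w * sTr n i) + (q - q⁻¹) • T w)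
    -- the hash involution
    (hash : H ≃ₐ[F] H)
    (hhash : ∀ w, hash (T w) = ((-1 : F) ^ len n w) • Ring.inverse (T w⁻¹))
    -- the seminormal Specht module S(λ) for a self-conjugate λ
    (μ : YoungDiagram) (hμ : μ.card = n) (hself : μ.transpose = μ)
    (act : H →ₗ[F] Module.End F (StdTab μ n → F))
    (hact : SpechtRep q sqm1 sq n T μ act)
    -- w = s_{i₁}⋯s_{i_k} reduced with increasing indices (here 0-indexed: the list
    -- `il` lists the indices `i₁ − 1 < ⋯ < i_k − 1`)
    (il : List ℕ) (hil : il.Chain' (· < ·)) (hiln : ∀ i ∈ il, i + 1 < n)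
    (w : Equiv.Perm (Fin n)) (hw : w = (il.map (sTr n)).prod)
    (hred : len n w = il.length)
    (t : StdTab μ n) :
    act (T w) (Pi.single t (1 : F) : StdTab μ n → F) (selfConjTab hself t)
      = if IsTransposable w t.val then (il.map (gam q sqm1 sq t.val)).prod
        else 0 := by
  have hpw : il.Pairwise (· < ·) := List.isChain_iff_pairwise.1 hil
  set u : StdTab μ n := selfConjTab hself t with hudef
  have hu : ∀ k : Fin n, u.val k = ((t.val k).2, (t.val k).1) := fun k => rfl
  -- reduce the left side to `Ecoef`
  have hred' : len n ((il.map (sTr n)).prod) = il.length := by rw [← hw]; exact hred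
  have hL : act (T w) (Pi.single t (1 : F) : StdTab μ n → F) u = Ecoef q sqm1 sq u il t := by
    rw [hw, T_prod T hT1 hmul1 il hiln hred']
    exact act_eq_Ecoef q sqm1 sq T act hact il hiln t u
  rw [hL]
  by_cases htr : IsTransposable w t.val
  · rw [if_pos htr]
    -- derive the combinatorial structure from transposability
    have hconjmem : ∀ k : Fin n, ((t.val k).2, (t.val k).1) ∈ μ := by
      intro k
      have hmem : ((t.val k).2, (t.val k).1) ∈ μ.transpose := by
        rw [YoungDiagram.mem_transpose]
        simpa using t.prop.2.1 k
      rwa [hself] at hmem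
    have hpartner : ∀ k : Fin n, (t.val k).1 ≠ (t.val k).2 →
        ∃ m : Fin n, t.val m = ((t.val k).2, (t.val k).1) :=
      fun k _ => std_surj t.prop hμ _ (hconjmem k)
    have hTri : ∀ k : Fin n, (t.val k).1 = (t.val k).2 ∨ DiagPair t.val (k : ℕ) ∨
        (1 ≤ (k : ℕ) ∧ DiagPair t.val ((k : ℕ) - 1)) := by
      intro k
      by_cases hoff : (t.val k).1 = (t.val k).2
      · exact Or.inl hoff
      · obtain ⟨m, hm⟩ := hpartner k hoff
        obtain ⟨hadj, -⟩ := htr k m hoff hm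
        rcases hadj with h1 | h2
        · -- m = k + 1
          right; left
          have hkn : (k : ℕ) + 1 < n := by
            have := m.isLt; omega
          refine ⟨hkn, ?_, ?_⟩
          · have : (⟨(k : ℕ), Nat.lt_of_succ_lt hkn⟩ : Fin n) = k := Fin.ext rfl
            rw [this]; exact hoff
          · have e1 : (⟨(k : ℕ) + 1, hkn⟩ : Fin n) = m :=
              Fin.ext (show (k : ℕ) + 1 = (m : ℕ) from h1.symm)
            have e2 : (⟨(k : ℕ), Nat.lt_of_succ_lt hkn⟩ : Fin n) = k := Fin.ext rfl
            rw [e1, e2]; exact hm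
        · -- k = m + 1
          right; right
          have hmn : (m : ℕ) + 1 < n := by
            have := k.isLt; omega
          have hk1 : 1 ≤ (k : ℕ) := by omega
          refine ⟨hk1, ?_⟩
          have hkm : (k : ℕ) - 1 = (m : ℕ) := by omega
          rw [hkm]
          refine ⟨hmn, ?_, ?_⟩
          · have e2 : (⟨(m : ℕ), Nat.lt_of_succ_lt hmn⟩ : Fin n) = m := Fin.ext rfl
            rw [e2, hm]
            exact fun hc => hoff hc.symm
          · have e1 : (⟨(m : ℕ) + 1, hmn⟩ : Fin n) = k :=
              Fin.ext (show (m : ℕ) + 1 = (k : ℕ) from h2.symm)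
            have e2 : (⟨(m : ℕ), Nat.lt_of_succ_lt hmn⟩ : Fin n) = m := Fin.ext rfl
            rw [e1, e2, hm]
    have hDmem : ∀ j : ℕ, DiagPair t.val j → j ∈ il := by
      intro j hdj
      obtain ⟨hj, hoffj, hpairj⟩ := hdj
      by_contra hnotmem
      obtain ⟨-, hsc⟩ := htr ⟨j, Nat.lt_of_succ_lt hj⟩ ⟨j + 1, hj⟩ hoffj hpairj
      rw [hw] at hsc
      exact not_sameCycle_of_not_mem hnotmem hj hsc
    have hD : ∀ j : ℕ, DiagPair t.val j → j ∈ il ∨ ∀ m ∈ il, j < m :=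
      fun j hdj => Or.inl (hDmem j hdj)
    have hst : ∀ k : Fin n, t.val k =
        if (DiagPair t.val (k : ℕ) ∧ (k : ℕ) ∈ il) ∨
           (1 ≤ (k : ℕ) ∧ DiagPair t.val ((k : ℕ) - 1) ∧ ((k : ℕ) - 1) ∈ il)
        then t.val k else ((t.val k).2, (t.val k).1) := by
      intro k
      split
      · rfl
      · rename_i hcond
        rcases hTri k with hdiag | hdp | ⟨h1, hdp⟩
        · exact Prod.ext_iff.mpr ⟨hdiag, hdiag.symm⟩
        · exact absurd (Or.inl ⟨hdp, hDmem _ hdp⟩) hcond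
        · exact absurd (Or.inr ⟨h1, hdp, hDmem _ hdp⟩) hcond
    exact Ecoef_pos q sqm1 sq t u hμ hu hTri il hpw hiln hD t hst
  · rw [if_neg htr]
    by_contra hne0
    apply htr
    intro j k hoff hpos
    have hjk : u.val j = t.val k := by rw [hu j, hpos]
    have hkj : u.val k = t.val j := by
      rw [hu k, hpos]
    have hb1 : (k : ℕ) ≤ (j : ℕ) + 1 :=
      Ecoef_entry_bound q sqm1 sq u il t hpw hne0 hjk
    have hb2 : (j : ℕ) ≤ (k : ℕ) + 1 :=
      Ecoef_entry_bound q sqm1 sq u il t hpw hne0 hkj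
    have hne : j ≠ k := by
      intro hc
      rw [← hc] at hpos
      exact hoff (congrArg Prod.snd hpos).symm
    have hvne : (j : ℕ) ≠ (k : ℕ) := fun hc => hne (Fin.ext hc)
    rcases (by omega : (k : ℕ) = (j : ℕ) + 1 ∨ (j : ℕ) = (k : ℕ) + 1) with hcase | hcase
    · refine ⟨Or.inl hcase, ?_⟩
      have hjn : (j : ℕ) + 1 < n := by have := k.isLt; omega
      have hmem : (j : ℕ) ∈ il := by
        apply Ecoef_swap_mem q sqm1 sq u il t hpw hne0 hjn
        have e1 : (⟨(j : ℕ), Nat.lt_of_succ_lt hjn⟩ : Fin n) = j := Fin.ext rfl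
        have e2 : (⟨(j : ℕ) + 1, hjn⟩ : Fin n) = k :=
          Fin.ext (show (j : ℕ) + 1 = (k : ℕ) by omega)
        rw [e1, e2]
        exact hjk
      refine ⟨1, ?_⟩
      rw [zpow_one, hw]
      have e1 : (⟨(j : ℕ), Nat.lt_of_succ_lt hjn⟩ : Fin n) = j := Fin.ext rfl
      have e2 : (⟨(j : ℕ) + 1, hjn⟩ : Fin n) = k :=
        Fin.ext (show (j : ℕ) + 1 = (k : ℕ) by omega)
      rw [← e1, prodS_apply_mem hpw hiln hmem hjn, e2]
    · refine ⟨Or.inr hcase, ?_⟩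
      have hkn : (k : ℕ) + 1 < n := by have := j.isLt; omega
      have hmem : (k : ℕ) ∈ il := by
        apply Ecoef_swap_mem q sqm1 sq u il t hpw hne0 hkn
        have e1 : (⟨(k : ℕ), Nat.lt_of_succ_lt hkn⟩ : Fin n) = k := Fin.ext rfl
        have e2 : (⟨(k : ℕ) + 1, hkn⟩ : Fin n) = j :=
          Fin.ext (show (k : ℕ) + 1 = (j : ℕ) by omega)
        rw [e1, e2]
        exact hkj
      apply Equiv.Perm.SameCycle.symm
      refine ⟨1, ?_⟩
      rw [zpow_one, hw]
      have e1 : (⟨(k : ℕ), Nat.lt_of_succ_lt hkn⟩ : Fin n) = k := Fin.ext rfl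
      have e2 : (⟨(k : ℕ) + 1, hkn⟩ : Fin n) = j :=
        Fin.ext (show (k : ℕ) + 1 = (j : ℕ) by omega)
      rw [← e1, prodS_apply_mem hpw hiln hmem hkn, e2]

end
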